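/- Let C be a Krull-Schmidt category with local descending chain condition on ideals in which rad_C* = 0, and let I be an ideal of C generated by a set of identity morphisms. Then I is idempotent; conversely any idempotent ideal of C is of this form. In particular, the map sending a class of objects closed under direct summands and finite direct sums to the ideal of morphisms factoring through its members gives a surjection onto the idempotent ideals of C. -/

import Mathlib

open CategoryTheory CategoryTheory.Limits

universe w v u

structure CatIdeal (C : Type u) [Category.{v} C] [Preadditive C] where
  mem : ∀ {X Y : C}, (X ⟶ Y) → Prop
  zero_mem : ∀ {X Y : C}, mem (0 : X ⟶ Y)
  add_mem : ∀ {X Y : C} {f g : X ⟶ Y}, mem f → mem g → mem (f + g)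
  comp_mem_left : ∀ {X Y Z : C} {f : X ⟶ Y} (g : Y ⟶ Z), mem f → mem (f ≫ g)
  comp_mem_right : ∀ {X Y Z : C} (f : X ⟶ Y) {g : Y ⟶ Z}, mem g → mem (f ≫ g)

namespace CatIdeal

variable {C : Type u} [Category.{v} C] [Preadditive C]

instance : LE (CatIdeal C) :=
  ⟨fun I J => ∀ {X Y : C} {f : X ⟶ Y}, I.mem f → J.mem f⟩

/-- The ideal of all morphisms. -/
def top (C : Type u) [Category.{v} C] [Preadditive C] : CatIdeal C where
  mem _ := True
  zero_mem := trivial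
  add_mem := by intros; trivial
  comp_mem_left := by intros; trivial
  comp_mem_right := by intros; trivial

/-- The ideal generated by a class of morphisms. -/
def span (S : ∀ {X Y : C}, (X ⟶ Y) → Prop) : CatIdeal C where
  mem f := ∀ J : CatIdeal C, (∀ {A B : C} {g : A ⟶ B}, S g → J.mem g) → J.mem f
  zero_mem := fun J _ => J.zero_mem
  add_mem := by intro X Y f g hf hg J hS; exact J.add_mem (hf J hS) (hg J hS)
  comp_mem_left := by intro X Y Z f g hf J hS; exact J.comp_mem_left g (hf J hS)
  comp_mem_right := by intro X Y Z f g hg J hS; exact J.comp_mem_right f (hg J hS)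

/-- The product of two ideals: the ideal generated by all composites `g ≫ h`
with `g ∈ I` and `h ∈ J`. -/
def mul (I J : CatIdeal C) : CatIdeal C :=
  span (fun {X Z} f => ∃ (Y : C) (g : X ⟶ Y) (h : Y ⟶ Z), I.mem g ∧ J.mem h ∧ f = g ≫ h)

/-- An ideal is idempotent if it equals its square. -/
def IsIdempotent (I : CatIdeal C) : Prop := I = I.mul I

/-- The intersection of a family of ideals. -/
def iInter {ι : Sort*} (F : ι → CatIdeal C) : CatIdeal C where
  mem f := ∀ i, (F i).mem f
  zero_mem := fun i => (F i).zero_mem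
  add_mem := by intro X Y f g hf hg i; exact (F i).add_mem (hf i) (hg i)
  comp_mem_left := by intro X Y Z f g hf i; exact (F i).comp_mem_left g (hf i)
  comp_mem_right := by intro X Y Z f g hg i; exact (F i).comp_mem_right f (hg i)

/-- Finite powers of an ideal: `npow I n` is the ideal generated by `n`-fold
composites of morphisms from `I` (with `npow I 0` the ideal of all morphisms). -/
def npow (I : CatIdeal C) : ℕ → CatIdeal C
  | 0 => top C
  | n + 1 => (npow I n).mul I

/-- The largest limit-or-zero ordinal `≤ α`, namely `ω * (α / ω)`. -/
noncomputable def limitPart (α : Ordinal.{w}) : Ordinal.{w} :=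
  Ordinal.omega0 * (α / Ordinal.omega0)

theorem limitPart_lt {α : Ordinal.{w}} (h0 : α ≠ 0) (hl : ¬ Order.IsSuccLimit α) :
    limitPart α < α := by
  have hle : limitPart α ≤ α := Ordinal.mul_div_le α Ordinal.omega0
  rcases lt_or_eq_of_le hle with h | h
  · exact h
  · exfalso
    rcases eq_or_ne (α / Ordinal.omega0) 0 with hq | hq
    · exact h0 (by rw [← h]; simp [limitPart, hq])
    · exact hl (by rw [← h]; exact Ordinal.isSuccLimit_mul_left Ordinal.isSuccLimit_omega0 (pos_iff_ne_zero.2 hq))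

end CatIdeal

open Ordinal Classical in
/-- Transfinite powers of an ideal `I`: `tpow I 0` is the ideal of all morphisms,
`tpow I n` (for finite `n ≥ 1`) is the ideal generated by `n`-fold composites of
morphisms from `I`, `tpow I α = ⋂_{β < α} tpow I β` at limit ordinals `α`, and
`tpow I (β + n) = (tpow I β) ^ (n + 1)` for `β` limit and `1 ≤ n < ω`. -/
noncomputable def CatIdeal.tpow {C : Type u} [Category.{v} C] [Preadditive C]
    (I : CatIdeal C) : Ordinal.{w} → CatIdeal C
  | α =>
    if h0 : α = 0 then CatIdeal.top C
    else if hl : Order.IsSuccLimit α then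
      CatIdeal.iInter (fun β : {β : Ordinal.{w} // β < α} =>
        have := β.2
        CatIdeal.tpow I β.1)
    else
      (have : Ordinal.pred α < α :=
        Ordinal.pred_lt_iff_not_isSuccPrelimit.2 (fun hp => hl (Ordinal.isSuccLimit_iff.2 ⟨h0, hp⟩))
       CatIdeal.tpow I (Ordinal.pred α)).mul
        (if Ordinal.omega0 ≤ α then
          have := CatIdeal.limitPart_lt h0 hl
          CatIdeal.tpow I (CatIdeal.limitPart α)
         else I)
  termination_by α => α

namespace CatIdeal

/-- The intersection `I* = ⋂_α I^α` of all transfinite powers of `I`. -/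
noncomputable def tstar {C : Type u} [Category.{v} C] [Preadditive C] (I : CatIdeal C) : CatIdeal C :=
  iInter (fun α : Ordinal.{v} => tpow I α)

end CatIdeal

section KS

open CategoryTheory CategoryTheory.Limits

variable (C : Type u) [Category.{v} C] [Preadditive C]

/-- `X` is a biproduct (finite direct sum) of the finite family `Y`,
witnessed by projections and inclusions. -/
def IsBiproductOf (X : C) {n : ℕ} (Y : Fin n → C) : Prop :=
  ∃ (p : ∀ i, X ⟶ Y i) (s : ∀ i, Y i ⟶ X),
    (∀ i, s i ≫ p i = 𝟙 (Y i)) ∧ (∀ i j, i ≠ j → s i ≫ p j = 0) ∧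
    (∑ i, p i ≫ s i) = 𝟙 X

/-- An object is indecomposable if it is nonzero and has no idempotent endomorphisms
other than `0` and the identity (i.e. it admits no nontrivial direct sum decomposition). -/
def IsIndecomposableObj (X : C) : Prop :=
  ¬ IsZero X ∧ ∀ e : X ⟶ X, e ≫ e = e → e = 0 ∨ e = 𝟙 X

/-- The radical of a Krull-Schmidt category: the ideal generated by all non-invertible
morphisms between indecomposable objects. -/
def catRadical : CatIdeal C :=
  CatIdeal.span (fun {X Y} f => IsIndecomposableObj C X ∧ IsIndecomposableObj C Y ∧ ¬ IsIso f)

/-- The transfinite radical `rad_C* = ⋂_α rad_C^α`. -/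
noncomputable def catTransRadical : CatIdeal C := CatIdeal.tstar (catRadical C)

/-- A Krull-Schmidt category: every object decomposes as a finite direct sum of objects
with local endomorphism rings. -/
def IsKrullSchmidt : Prop :=
  ∀ X : C, ∃ (n : ℕ) (Y : Fin n → C),
    (∀ i, IsLocalRing (End (Y i))) ∧ IsBiproductOf C X Y

/-- Local descending chain condition on ideals: every descending chain of ideals,
evaluated at any fixed pair of objects, stabilizes. -/
def HasLocalDCC : Prop :=
  ∀ (I : ℕ → CatIdeal C), (∀ n, I (n + 1) ≤ I n) →
    ∀ X Y : C, ∃ n, ∀ m, n ≤ m → ∀ f : X ⟶ Y, (I m).mem f ↔ (I n).mem f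

/-- The ideal generated by the identity morphisms of the objects in `S`. -/
def identityIdeal (S : Set C) : CatIdeal C :=
  CatIdeal.span (fun {X Y} f => ∃ h : X = Y, X ∈ S ∧ f = CategoryTheory.eqToHom h)

/-- An ideal is zero if it consists exactly of the zero morphisms. -/
def CatIdeal.IsZeroIdeal {C : Type u} [Category.{v} C] [Preadditive C] (I : CatIdeal C) : Prop :=
  ∀ {X Y : C} {f : X ⟶ Y}, I.mem f → f = 0

end KS
-- experiments
open CategoryTheory CategoryTheory.Limits CatIdeal

namespace CatIdeal
variable {C : Type u} [Category.{v} C] [Preadditive C]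

lemma ext' {I J : CatIdeal C} (h : ∀ (X Y : C) (f : X ⟶ Y), I.mem f ↔ J.mem f) : I = J := by
  obtain ⟨mI, _, _, _, _⟩ := I
  obtain ⟨mJ, _, _, _, _⟩ := J
  have : @mI = @mJ := by
    funext X Y f
    exact propext (h X Y f)
  subst this
  rfl

lemma tpow_zero (I : CatIdeal C) : tpow I (0 : Ordinal.{w}) = top C := by
  rw [tpow]
  simp

lemma tpow_limit (I : CatIdeal C) {α : Ordinal.{w}} (h : Order.IsSuccLimit α) :
    tpow I α = iInter (fun β : {β : Ordinal.{w} // β < α} => tpow I β.1) := by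
  rw [tpow]
  simp [(Ordinal.isSuccLimit_iff.1 h).1, h]

lemma tpow_succ (I : CatIdeal C) {α : Ordinal.{w}} (h0 : α ≠ 0) (hl : ¬ Order.IsSuccLimit α) :
    tpow I α = (tpow I (Ordinal.pred α)).mul
      (if Ordinal.omega0 ≤ α then tpow I (limitPart α) else I) := by
  rw [tpow]
  simp [h0, hl]

end CatIdeal
namespace CatIdeal
variable {C : Type u} [Category.{v} C] [Preadditive C]

lemma mem_span_of_gen {S : ∀ {X Y : C}, (X ⟶ Y) → Prop} {A B : C} {g : A ⟶ B}
    (hg : S g) : (span S).mem g :=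
  fun _ hK => hK hg

lemma span_le {S : ∀ {X Y : C}, (X ⟶ Y) → Prop} {K : CatIdeal C}
    (h : ∀ {A B : C} {g : A ⟶ B}, S g → K.mem g) {X Y : C} {f : X ⟶ Y}
    (hf : (span S).mem f) : K.mem f :=
  hf K h

lemma mem_mul {I J : CatIdeal C} {X Y Z : C} {g : X ⟶ Y} {h : Y ⟶ Z}
    (hg : I.mem g) (hh : J.mem h) : (I.mul J).mem (g ≫ h) :=
  mem_span_of_gen ⟨Y, g, h, hg, hh, rfl⟩

lemma mul_le_left {I J : CatIdeal C} {X Y : C} {f : X ⟶ Y}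
    (hf : (I.mul J).mem f) : I.mem f := by
  refine span_le ?_ hf
  rintro A B g ⟨Z, a, b, ha, _, rfl⟩
  exact I.comp_mem_left b ha

/-- The sum of two ideals. -/
def addI (I J : CatIdeal C) : CatIdeal C where
  mem f := ∃ g h, I.mem g ∧ J.mem h ∧ f = g + h
  zero_mem := ⟨0, 0, I.zero_mem, J.zero_mem, by simp⟩
  add_mem := by
    rintro X Y f g ⟨a, b, ha, hb, rfl⟩ ⟨c, d, hc, hd, rfl⟩
    exact ⟨a + c, b + d, I.add_mem ha hc, J.add_mem hb hd, by abel⟩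
  comp_mem_left := by
    rintro X Y Z f g ⟨a, b, ha, hb, rfl⟩
    exact ⟨a ≫ g, b ≫ g, I.comp_mem_left g ha, J.comp_mem_left g hb,
      by rw [Preadditive.add_comp]⟩
  comp_mem_right := by
    rintro X Y Z f g ⟨a, b, ha, hb, rfl⟩
    exact ⟨f ≫ a, f ≫ b, I.comp_mem_right f ha, J.comp_mem_right f hb,
      by rw [Preadditive.comp_add]⟩

lemma mem_addI_left {I J : CatIdeal C} {X Y : C} {f : X ⟶ Y} (hf : I.mem f) :
    (addI I J).mem f := ⟨f, 0, hf, J.zero_mem, by simp⟩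

lemma mem_addI_right {I J : CatIdeal C} {X Y : C} {f : X ⟶ Y} (hf : J.mem f) :
    (addI I J).mem f := ⟨0, f, I.zero_mem, hf, by simp⟩

lemma sum_mem (I : CatIdeal C) {X Y : C} {ι : Type*} (s : Finset ι)
    (f : ι → (X ⟶ Y)) (h : ∀ i ∈ s, I.mem (f i)) : I.mem (∑ i ∈ s, f i) := by
  classical
  induction s using Finset.induction with
  | empty => simpa using I.zero_mem
  | insert _ _ hx ih =>
    rw [Finset.sum_insert hx]
    exact I.add_mem (h _ (Finset.mem_insert_self _ _))
      (ih fun i hi => h i (Finset.mem_insert_of_mem hi))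

lemma tpow_antitone (I : CatIdeal C) :
    ∀ (α : Ordinal.{w}) (β : Ordinal.{w}), β ≤ α →
      ∀ {X Y : C} {f : X ⟶ Y}, (tpow I α).mem f → (tpow I β).mem f := by
  intro α
  induction α using Ordinal.induction with
  | h α IH =>
    intro β hβ X Y f hf
    rcases eq_or_lt_of_le hβ with rfl | hβ
    · exact hf
    rcases eq_or_ne α 0 with rfl | h0
    · exact absurd hβ (not_lt_of_ge (zero_le (a := β)))
    by_cases hl : Order.IsSuccLimit α
    · rw [tpow_limit I hl] at hf
      exact hf ⟨β, hβ⟩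
    · rw [tpow_succ I h0 hl] at hf
      have hsucc := (Ordinal.zero_or_succ_or_isSuccLimit α).resolve_left h0 |>.resolve_right hl
      have hpred : Ordinal.pred α < α := Ordinal.pred_lt_iff_not_isSuccPrelimit.2 (fun hp => hl (Ordinal.isSuccLimit_iff.2 ⟨h0, hp⟩))
      have hβp : β ≤ Ordinal.pred α := by
        obtain ⟨γ, rfl⟩ := hsucc
        rw [Ordinal.pred_succ]
        exact Order.lt_succ_iff.1 hβ
      exact IH _ hpred β hβp (mul_le_left hf)

end CatIdeal
section Stab
open CatIdeal
variable {C : Type u} [Category.{v} C] [Preadditive C]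

lemma stab (hdcc : HasLocalDCC C) (R : CatIdeal C) (X Y : C)
    (Q : Ordinal.{v} → Prop) (hQ : ∃ γ, Q γ) :
    ∃ γ₀, Q γ₀ ∧ ∀ γ, Q γ → γ₀ ≤ γ →
      ∀ f : X ⟶ Y, ((tpow R γ).mem f ↔ (tpow R γ₀).mem f) := by
  by_contra hcon
  push_neg at hcon
  choose F hQF hleF f0 hf0 using hcon
  obtain ⟨γi, hγi⟩ := hQ
  let g : ℕ → {γ : Ordinal.{v} // Q γ} :=
    fun n => Nat.rec ⟨γi, hγi⟩ (fun _ p => ⟨F p.1 p.2, hQF p.1 p.2⟩) n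
  obtain ⟨n₀, hn₀⟩ := hdcc (fun n => tpow R (g n).1)
    (fun n => show (tpow R (g (n+1)).1) ≤ (tpow R (g n).1) from
      fun hf => tpow_antitone R (g (n+1)).1 (g n).1 (hleF (g n).1 (g n).2) hf) X Y
  have h1 := hn₀ (n₀ + 1) (Nat.le_succ _) (f0 (g n₀).1 (g n₀).2)
  rcases hf0 (g n₀).1 (g n₀).2 with ⟨hA, hB⟩ | ⟨hA, hB⟩
  · exact hB (h1.1 hA)
  · exact hA (h1.2 hB)

end Stab
section KSLemmas
open CategoryTheory CategoryTheory.Limits CatIdeal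
variable {C : Type u} [Category.{v} C] [Preadditive C]

lemma indec_of_localEnd (X : C) (h : IsLocalRing (End X)) : IsIndecomposableObj C X := by
  constructor
  · intro hz
    exact one_ne_zero (α := End X) (hz.eq_of_src _ _)
  · intro e he
    let e' : End X := e
    have hid : e' * e' = e' := by rw [End.mul_def]; exact he
    rcases h.isUnit_or_isUnit_of_add_one (a := e') (b := 1 - e') (by abel) with hu | hu
    · right
      have : e' * e' = e' * 1 := by rw [hid, mul_one]
      exact hu.mul_left_cancel this
    · left
      have h2 : ((1 : End X) - e') * (1 - e') = (1 - e') * 1 := by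
        have hnr : ((1 : End X) - e') * (1 - e') = 1 - e' - (e' - e' * e') := by noncomm_ring
        rw [hnr, hid, sub_self, sub_zero, mul_one]
      have h3 : (1 : End X) - e' = 1 := hu.mul_left_cancel h2
      have he0 : e' = 0 := by
        have := sub_eq_self.mp h3
        simpa using this
      exact he0

end KSLemmas
section LemmaB
open CategoryTheory CategoryTheory.Limits CatIdeal
variable {C : Type u} [Category.{v} C] [Preadditive C]

lemma le_addI_rad (hKS : IsKrullSchmidt C) (I : CatIdeal C) {X Y : C} {f : X ⟶ Y}
    (hf : I.mem f) :
    (addI (identityIdeal C {Z | I.mem (𝟙 Z)}) (catRadical C)).mem f := by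
  obtain ⟨n, A, hlocA, pA, sA, hA1, hA2, hA3⟩ := hKS X
  obtain ⟨m, B, hlocB, pB, sB, hB1, hB2, hB3⟩ := hKS Y
  set J := identityIdeal C {Z | I.mem (𝟙 Z)} with hJ
  have hf2 : f = ∑ i : Fin n, ∑ j : Fin m, pA i ≫ (sA i ≫ f ≫ pB j) ≫ sB j := by
    calc f = (∑ i, pA i ≫ sA i) ≫ f ≫ (∑ j, pB j ≫ sB j) := by rw [hA3, hB3]; simp
    _ = _ := by
      rw [Preadditive.sum_comp]
      refine Finset.sum_congr rfl fun i _ => ?_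
      rw [Preadditive.comp_sum, Preadditive.comp_sum]
      refine Finset.sum_congr rfl fun j _ => ?_
      simp only [Category.assoc]
  rw [hf2]
  apply CatIdeal.sum_mem; intro i _
  apply CatIdeal.sum_mem; intro j _
  have hcI : I.mem (sA i ≫ f ≫ pB j) := I.comp_mem_right _ (I.comp_mem_left _ hf)
  by_cases hiso : IsIso (sA i ≫ f ≫ pB j)
  · refine mem_addI_left ?_
    have h1 : I.mem (𝟙 (A i)) := by
      have := I.comp_mem_left (CategoryTheory.inv (sA i ≫ f ≫ pB j)) hcI
      rwa [IsIso.hom_inv_id] at this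
    have hgen : J.mem (𝟙 (A i)) := mem_span_of_gen ⟨rfl, h1, by simp⟩
    have := J.comp_mem_right (pA i)
      (J.comp_mem_left ((sA i ≫ f ≫ pB j) ≫ sB j) hgen)
    simpa using this
  · refine mem_addI_right ?_
    have hgen : (catRadical C).mem (sA i ≫ f ≫ pB j) :=
      mem_span_of_gen ⟨indec_of_localEnd _ (hlocA i), indec_of_localEnd _ (hlocB j), hiso⟩
    exact (catRadical C).comp_mem_right (pA i) ((catRadical C).comp_mem_left (sB j) hgen)

end LemmaB
section Main
open CategoryTheory CategoryTheory.Limits CatIdeal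

variable {C : Type u} [Category.{v} C] [Preadditive C]

lemma main_le (hKS : IsKrullSchmidt C) (hdcc : HasLocalDCC C)
    (I : CatIdeal C) (hI : I.IsIdempotent) :
    ∀ α : Ordinal.{v}, ∀ {X Y : C} {f : X ⟶ Y}, I.mem f →
      (addI (identityIdeal C {Z | I.mem (𝟙 Z)}) (tpow (catRadical C) α)).mem f := by
  set J := identityIdeal C {Z | I.mem (𝟙 Z)} with hJdef
  intro α
  induction α using Ordinal.induction with
  | h α IH =>
    intro X Y f hf
    rcases eq_or_ne α 0 with rfl | h0
    · rw [tpow_zero]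
      exact ⟨0, f, J.zero_mem, trivial, (zero_add f).symm⟩
    by_cases hl : Order.IsSuccLimit α
    · obtain ⟨γ₀, hγ₀α, hstab⟩ := stab hdcc (catRadical C) X Y (fun γ => γ < α)
        ⟨0, pos_iff_ne_zero.2 h0⟩
      obtain ⟨j, r, hj, hr, hfeq⟩ := IH γ₀ hγ₀α hf
      refine ⟨j, r, hj, ?_, hfeq⟩
      rw [tpow_limit _ hl]
      rintro ⟨β, hβ⟩
      rcases le_total β γ₀ with hle | hle
      · exact tpow_antitone _ _ _ hle hr
      · exact (hstab β hβ hle r).mpr hr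
    · have hf2 : (I.mul I).mem f := hI ▸ hf
      rw [tpow_succ _ h0 hl]
      have key : ∀ (T : CatIdeal C),
          (∀ {A B : C} {g : A ⟶ B}, I.mem g → (addI J T).mem g) →
          (addI J ((tpow (catRadical C) (Ordinal.pred α)).mul T)).mem f := by
        intro T hT
        refine hf2 _ ?_
        rintro A B g ⟨Z, a, b, ha, hb, rfl⟩
        have hpred : Ordinal.pred α < α := Ordinal.pred_lt_iff_not_isSuccPrelimit.2
          (fun hp => hl (Ordinal.isSuccLimit_iff.2 ⟨h0, hp⟩))
        obtain ⟨j₁, k, hj₁, hk, haeq⟩ := IH (Ordinal.pred α) hpred ha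
        obtain ⟨j₂, l, hj₂, hl', hbeq⟩ := hT hb
        refine ⟨j₁ ≫ b + k ≫ j₂, k ≫ l, J.add_mem (J.comp_mem_left b hj₁)
          (J.comp_mem_right k hj₂), mem_mul hk hl', ?_⟩
        rw [haeq, hbeq]
        simp only [Preadditive.add_comp, Preadditive.comp_add]
        abel
      by_cases hω : Ordinal.omega0 ≤ α
      · rw [if_pos hω]
        exact key _ (fun hg => IH (limitPart α) (limitPart_lt h0 hl) hg)
      · rw [if_neg hω]
        exact key _ (fun hg => le_addI_rad hKS I hg)

end Main
section Final
open CategoryTheory CategoryTheory.Limits CatIdeal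
open ZeroObject

variable {C : Type u} [Category.{v} C] [Preadditive C]

lemma part2_eq (hKS : IsKrullSchmidt C) (hdcc : HasLocalDCC C)
    (hrad : (catTransRadical C).IsZeroIdeal) (I : CatIdeal C) (hI : I.IsIdempotent) :
    I = identityIdeal C {Z | I.mem (𝟙 Z)} := by
  apply CatIdeal.ext'
  intro X Y f
  constructor
  · intro hf
    obtain ⟨γ₀, -, hstab⟩ := stab hdcc (catRadical C) X Y (fun _ => True) ⟨0, trivial⟩
    obtain ⟨j, r, hj, hr, hfeq⟩ := main_le hKS hdcc I hI γ₀ hf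
    have hr0 : r = 0 := by
      refine hrad (fun γ => ?_)
      rcases le_total γ γ₀ with hle | hle
      · exact tpow_antitone _ _ _ hle hr
      · exact (hstab γ trivial hle r).mpr hr
    rw [hfeq, hr0, add_zero]
    exact hj
  · intro hf
    refine span_le ?_ hf
    rintro A B g ⟨rfl, hA, rfl⟩
    simpa using I.comp_mem_left (CategoryTheory.eqToHom rfl) hA

lemma part1_idem (S : Set C) : (identityIdeal C S).IsIdempotent := by
  apply CatIdeal.ext'
  intro X Y f
  constructor
  · intro hf
    refine span_le ?_ hf
    rintro A B g ⟨rfl, hA, rfl⟩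
    have hgen : (identityIdeal C S).mem (𝟙 A) := mem_span_of_gen ⟨rfl, hA, by simp⟩
    simpa using mem_mul hgen hgen
  · exact fun hf => mul_le_left hf

variable [HasZeroObject C] [HasBinaryBiproducts C]

/-- The ideal of morphisms factoring through an object whose identity lies in `I`. -/
def factorIdeal (I : CatIdeal C) : CatIdeal C where
  mem {X Y} f := ∃ Z, I.mem (𝟙 Z) ∧ ∃ (g : X ⟶ Z) (h : Z ⟶ Y), f = g ≫ h
  zero_mem {X Y} := ⟨0, by rw [CategoryTheory.Limits.id_zero]; exact I.zero_mem,
    0, 0, by simp⟩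
  add_mem := by
    rintro X Y f₁ f₂ ⟨Z₁, hZ₁, g₁, h₁, rfl⟩ ⟨Z₂, hZ₂, g₂, h₂, rfl⟩
    refine ⟨Z₁ ⊞ Z₂, ?_, biprod.lift g₁ g₂, biprod.desc h₁ h₂, by simp⟩
    have : I.mem (biprod.fst ≫ 𝟙 Z₁ ≫ biprod.inl + biprod.snd ≫ 𝟙 Z₂ ≫ biprod.inr
        : Z₁ ⊞ Z₂ ⟶ Z₁ ⊞ Z₂) :=
      I.add_mem (I.comp_mem_right _ (I.comp_mem_left _ hZ₁))
        (I.comp_mem_right _ (I.comp_mem_left _ hZ₂))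
    simpa [biprod.total] using this
  comp_mem_left := by
    rintro X Y W f k ⟨Z, hZ, g, h, rfl⟩
    exact ⟨Z, hZ, g, h ≫ k, by simp⟩
  comp_mem_right := by
    rintro X Y W f k ⟨Z, hZ, g, h, rfl⟩
    exact ⟨Z, hZ, f ≫ g, h, by simp⟩

end Final


open CategoryTheory in
/-- With vanishing transfinite radical, the idempotent ideals are exactly
the ideals generated by sets of identity morphisms; equivalently, every idempotent ideal
consists of the morphisms factoring through a class of objects closed under direct
summands and finite direct sums. -/
theorem stmt17 {C : Type u} [CategoryTheory.Category.{v} C] [CategoryTheory.Preadditive C] [CategoryTheory.Limits.HasFiniteBiproducts C] [CategoryTheory.EssentiallySmall.{v} C] (hKS : IsKrullSchmidt C) (hdcc : HasLocalDCC C)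
    (hrad : (catTransRadical C).IsZeroIdeal) :
    (∀ S : Set C, (identityIdeal C S).IsIdempotent) ∧
    (∀ I : CatIdeal C, I.IsIdempotent → ∃ S : Set C, I = identityIdeal C S) ∧
    (∀ I : CatIdeal C, I.IsIdempotent →
      ∃ D : Set C,
        (∀ X ∈ D, ∀ Y : C, (∃ (s : Y ⟶ X) (r : X ⟶ Y), s ≫ r = 𝟙 Y) → Y ∈ D) ∧
        (∀ (n : ℕ) (Y : Fin n → C), (∀ i, Y i ∈ D) →
          ∀ X : C, IsBiproductOf C X Y → X ∈ D) ∧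
        (∀ {X Y : C} (f : X ⟶ Y),
          I.mem f ↔ ∃ Z ∈ D, ∃ (g : X ⟶ Z) (h : Z ⟶ Y), f = g ≫ h)) := by
  haveI : CategoryTheory.Limits.HasBinaryBiproducts C :=
    CategoryTheory.Limits.hasBinaryBiproducts_of_finite_biproducts C
  refine ⟨part1_idem, fun I hI => ⟨_, part2_eq hKS hdcc hrad I hI⟩, ?_⟩
  intro I hI
  refine ⟨{Z | I.mem (𝟙 Z)}, ?_, ?_, ?_⟩
  · rintro X hX Y ⟨s, r, hsr⟩
    have := I.comp_mem_right s (I.comp_mem_left r hX)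
    simpa [hsr] using this
  · rintro n Y hY X ⟨p, s, h1, h2, h3⟩
    have : I.mem (∑ i, p i ≫ 𝟙 (Y i) ≫ s i) := CatIdeal.sum_mem _ _ _
      (fun i _ => I.comp_mem_right _ (I.comp_mem_left _ (hY i)))
    simpa [h3] using this
  · intro X Y f
    constructor
    · intro hf
      have heq := part2_eq hKS hdcc hrad I hI
      rw [heq] at hf
      have hfac : (factorIdeal I).mem f := by
        refine CatIdeal.span_le ?_ hf
        rintro A B g ⟨rfl, hA, rfl⟩
        exact ⟨A, hA, 𝟙 A, CategoryTheory.eqToHom rfl, by simp⟩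
      exact hfac
    · rintro ⟨Z, hZ, g, h, rfl⟩
      have := I.comp_mem_right g (I.comp_mem_left h hZ)
      simpa using this
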